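/- For every integer n ≥ 0, F_{n+1}·F_{n+2}·F_{n+6} - F_{n+3}^3 = (-1)^n·F_n. -/
import Mathlib

lemma cassini (n : ℕ) :
    (Nat.fib (n+1) : ℤ)^2 - Nat.fib (n+1) * Nat.fib n - (Nat.fib n : ℤ)^2 = (-1)^n := by
  induction n with
  | zero => simp
  | succ k ih =>
    have h : (Nat.fib (k+2) : ℤ) = Nat.fib (k+1) + Nat.fib k := by
      rw [Nat.fib_add_two]; push_cast; ring
    rw [h, pow_succ]
    linear_combination (-1 : ℤ) * ih

theorem stmt_18 (n : ℕ) :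
    (Nat.fib (n + 1) : ℤ) * Nat.fib (n + 2) * Nat.fib (n + 6) - (Nat.fib (n + 3) : ℤ) ^ 3 =
      (-1) ^ n * Nat.fib n := by
  have e : ∀ m : ℕ, (Nat.fib (m+2) : ℤ) = Nat.fib (m+1) + Nat.fib m := by
    intro m; rw [Nat.fib_add_two]; push_cast; ring
  set a : ℤ := (Nat.fib n : ℤ) with ha
  set b : ℤ := (Nat.fib (n+1) : ℤ) with hb
  have h2 : (Nat.fib (n+2) : ℤ) = a + b := by rw [e n]; ring
  have h3 : (Nat.fib (n+3) : ℤ) = a + 2*b := by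
    have := e (n+1); rw [show n+1+2 = n+3 from rfl, show n+1+1 = n+2 from rfl] at this
    rw [this, h2]; ring
  have h4 : (Nat.fib (n+4) : ℤ) = 2*a + 3*b := by
    have := e (n+2); rw [show n+2+2 = n+4 from rfl, show n+2+1 = n+3 from rfl] at this
    rw [this, h3, h2]; ring
  have h5 : (Nat.fib (n+5) : ℤ) = 3*a + 5*b := by
    have := e (n+3); rw [show n+3+2 = n+5 from rfl, show n+3+1 = n+4 from rfl] at this
    rw [this, h4, h3]; ring
  have h6 : (Nat.fib (n+6) : ℤ) = 5*a + 8*b := by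
    have := e (n+4); rw [show n+4+2 = n+6 from rfl, show n+4+1 = n+5 from rfl] at this
    rw [this, h5, h4]; ring
  have hc : b^2 - b*a - a^2 = (-1)^n := cassini n
  rw [h2, h3, h6]
  linear_combination a * hc
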